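/- For every pseudo-Boolean function f: {0,1}^n → ℝ and every S ⊆ N, the Banzhaf influence index satisfies Φ_B(f,S) = ⟨f, g_S⟩, where g_S(x) = 2^{|S|}(Π_{i∈S} x_i − Π_{i∈S}(1−x_i)) and ⟨f,g⟩ = 2^{-n} Σ_{x∈{0,1}^n} f(x)g(x). -/

import Mathlib

open Finset

/-- The Banzhaf influence index `Φ_B(f,S) = 2^{-(n-|S|)} Σ_{T⊆N∖S} (f(T∪S) − f(T))`. -/
noncomputable def banzhafInfluence {n : ℕ} (f : Finset (Fin n) → ℝ) (S : Finset (Fin n)) : ℝ :=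
  (1 / 2 ^ (n - S.card)) * ∑ T ∈ (univ \ S).powerset, (f (T ∪ S) - f T)

/-- `Φ_B(f,S) = ⟨f, g_S⟩` where
`g_S(x) = 2^{|S|}(Π_{i∈S} x_i − Π_{i∈S}(1−x_i))` and `⟨f,g⟩ = 2^{-n} Σ_x f(x)g(x)`. -/
theorem banzhafInfluence_eq_inner (n : ℕ) (f : Finset (Fin n) → ℝ) (S : Finset (Fin n)) :
    banzhafInfluence f S
      = (1 / 2 ^ n) * ∑ X : Finset (Fin n),
          f X * (2 ^ S.card *
            ((∏ i ∈ S, (if i ∈ X then (1 : ℝ) else 0))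
              - ∏ i ∈ S, (1 - (if i ∈ X then (1 : ℝ) else 0)))) := by
  have hcard : S.card ≤ n := by simpa using card_le_card (subset_univ S)
  have hprod1 : ∀ X : Finset (Fin n),
      (∏ i ∈ S, (if i ∈ X then (1:ℝ) else 0)) = if S ⊆ X then 1 else 0 := by
    intro X
    rw [Finset.prod_boole]
    simp [Finset.subset_iff]
  have hprod2 : ∀ X : Finset (Fin n),
      (∏ i ∈ S, (1 - (if i ∈ X then (1:ℝ) else 0))) = if Disjoint S X then 1 else 0 := by
    intro X
    have h : ∀ i : Fin n, (1 - (if i ∈ X then (1:ℝ) else 0)) = if i ∉ X then 1 else 0 := by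
      intro i; by_cases h : i ∈ X <;> simp [h]
    simp_rw [h, Finset.prod_boole]
    simp [Finset.disjoint_left]
  simp only [hprod1, hprod2]
  have hA : ∑ T ∈ (univ \ S).powerset, f (T ∪ S)
      = ∑ X ∈ univ.filter (fun X : Finset (Fin n) => S ⊆ X), f X := by
    refine Finset.sum_nbij' (fun T => T ∪ S) (fun X => X \ S) ?_ ?_ ?_ ?_ ?_
    · intro T hT
      simp only [mem_powerset, subset_sdiff] at hT
      simp [Finset.subset_union_right]
    · intro X hX
      simp only [mem_filter] at hX
      simp [mem_powerset, subset_sdiff, disjoint_sdiff_self_left]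
    · intro T hT
      simp only [mem_powerset, subset_sdiff] at hT
      exact Finset.union_sdiff_cancel_right hT.2
    · intro X hX
      simp only [mem_filter] at hX
      exact Finset.sdiff_union_of_subset hX.2
    · intro T hT; rfl
  have hB : ∑ T ∈ (univ \ S).powerset, f T
      = ∑ X ∈ univ.filter (fun X : Finset (Fin n) => Disjoint S X), f X := by
    apply Finset.sum_congr
    · ext X
      simp [mem_powerset, subset_sdiff, disjoint_comm]
    · intros; rfl
  have hRA : ∑ X : Finset (Fin n), (if S ⊆ X then f X else 0)
      = ∑ X ∈ univ.filter (fun X : Finset (Fin n) => S ⊆ X), f X := by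
    rw [Finset.sum_filter]
  have hRB : ∑ X : Finset (Fin n), (if Disjoint S X then f X else 0)
      = ∑ X ∈ univ.filter (fun X : Finset (Fin n) => Disjoint S X), f X := by
    rw [Finset.sum_filter]
  have key : ∑ X : Finset (Fin n),
      f X * (2 ^ S.card * ((if S ⊆ X then (1:ℝ) else 0) - if Disjoint S X then 1 else 0))
      = 2 ^ S.card * (∑ T ∈ (univ \ S).powerset, (f (T ∪ S) - f T)) := by
    rw [Finset.sum_sub_distrib, hA, hB, ← hRA, ← hRB, ← Finset.sum_sub_distrib,
      Finset.mul_sum]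
    apply Finset.sum_congr rfl
    intro X _
    by_cases h1 : S ⊆ X <;> by_cases h2 : Disjoint S X <;> simp [h1, h2] <;> ring
  rw [key, banzhafInfluence]
  rw [show (2:ℝ)^n = 2^(n - S.card) * 2^S.card by
    rw [← pow_add, Nat.sub_add_cancel hcard]]
  field_simp
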